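/- Let k > 0, d > 0, d_D > 0, σ_Y² > 0, m_Y ≤ 1. Set p_c = k/(2d_D²) and suppose p_c < 1 and k²p_c(1-p_c) + (2d²)⁻¹(m_Y - 1 + p_c·k) > 0. Then there exists p* ∈ [0, p_c] ⊆ [0,1] with x₁(p*) = x₂(p*) and x₁(p*) ∈ [0,1], where x₁(p) = 1 - 2d_D²p/k and x₂(p) = (k²p(1-p) + (2d²)⁻¹(m_Y - 1 + kp)) / (k²p(1-p) + σ_Y²). -/

import Mathlib

theorem nash_exists_case_a (k d dD σY mY : ℝ) (hk : 0 < k) (hd : 0 < d)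
    (hdD : 0 < dD) (hσ : 0 < σY) (hm : mY ≤ 1)
    (pc : ℝ) (hpc : pc = k / (2*dD^2)) (hpc1 : pc < 1)
    (hcond : 0 < k^2*pc*(1-pc) + (2*d^2)⁻¹*(mY - 1 + pc*k))
    (x1 x2 : ℝ → ℝ)
    (hx1 : ∀ p, x1 p = 1 - 2*dD^2*p/k)
    (hx2 : ∀ p, x2 p = (k^2*p*(1-p) + (2*d^2)⁻¹*(mY - 1 + k*p)) /
      (k^2*p*(1-p) + σY)) :
    ∃ p : ℝ, p ∈ Set.Icc 0 pc ∧ p ∈ Set.Icc (0:ℝ) 1 ∧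
      x1 p = x2 p ∧ x1 p ∈ Set.Icc (0:ℝ) 1 := by
  have hdD2 : (0:ℝ) < 2*dD^2 := by positivity
  have hpc0 : 0 < pc := by rw [hpc]; positivity
  have hdenom : ∀ p ∈ Set.Icc (0:ℝ) pc, 0 < k^2*p*(1-p) + σY := by
    intro p hp
    have h0 : 0 ≤ p := hp.1
    have h1 : p ≤ 1 := le_of_lt (lt_of_le_of_lt hp.2 hpc1)
    nlinarith [mul_nonneg (mul_nonneg (sq_nonneg k) h0) (by linarith : (0:ℝ) ≤ 1-p)]
  set F : ℝ → ℝ := fun p => (1 - 2*dD^2*p/k) -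
    (k^2*p*(1-p) + (2*d^2)⁻¹*(mY - 1 + k*p)) / (k^2*p*(1-p) + σY) with hF
  have hcont : ContinuousOn F (Set.Icc 0 pc) := by
    apply ContinuousOn.sub
    · fun_prop
    · apply ContinuousOn.div
      · fun_prop
      · fun_prop
      · intro p hp; exact ne_of_gt (hdenom p hp)
  have hF0 : 0 ≤ F 0 := by
    have hv : F 0 = 1 - ((2*d^2)⁻¹*(mY - 1))/σY := by
      simp [hF]
    have hle : ((2*d^2)⁻¹*(mY - 1))/σY ≤ 0 := by
      apply div_nonpos_of_nonpos_of_nonneg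
      · have : (0:ℝ) < (2*d^2)⁻¹ := by positivity
        nlinarith
      · linarith
    rw [hv]; linarith
  have hFpc : F pc ≤ 0 := by
    have hx1pc : 1 - 2*dD^2*pc/k = 0 := by
      rw [hpc]; field_simp; norm_num
    have hnum : 0 < k^2*pc*(1-pc) + (2*d^2)⁻¹*(mY - 1 + k*pc) := by
      nlinarith
    have hden := hdenom pc ⟨le_of_lt hpc0, le_refl pc⟩
    simp only [hF, hx1pc, zero_sub, neg_nonpos]
    positivity
  have hsub : Set.Icc (F pc) (F 0) ⊆ F '' Set.Icc 0 pc :=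
    intermediate_value_Icc' (le_of_lt hpc0) hcont
  obtain ⟨p, hp, hFp⟩ := hsub ⟨hFpc, hF0⟩
  have h1 : p ≤ 1 := le_of_lt (lt_of_le_of_lt hp.2 hpc1)
  have hx1x2 : x1 p = x2 p := by
    rw [hx1, hx2]
    have : F p = 0 := hFp
    simp only [hF] at this
    linarith
  have hx1p0 : 0 ≤ x1 p := by
    rw [hx1]
    have hkpc : 2*dD^2*pc = k := by rw [hpc]; field_simp
    rw [sub_nonneg, div_le_one hk]
    nlinarith [hp.2]
  refine ⟨p, hp, ⟨hp.1, h1⟩, hx1x2, hx1p0, ?_⟩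
  rw [hx1]
  have : 0 ≤ 2*dD^2*p/k := by
    apply div_nonneg _ (le_of_lt hk)
    nlinarith [hp.1]
  linarith
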